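/- Fix τ ∈ ℍ with E4(τ) ≠ 0 and regard A₂ = Δ·K²/(4E4) − E6·L/24 + E4·M/24, B₁ = Δ·K/E4, B₂ = −E6·Δ·K²/(24E4²) − E4²·L/288 + E6·M/288, B₃ = −Δ²·K³/E4³ + Δ·K·M/(4E4) + Δ·N/4 as elements of the polynomial ring ℂ[K,L,M,N] in four formal variables K, L, M, N (with Δ = Δ(τ), E4 = E4(τ), E6 = E6(τ)). Then the determinant of the 4×4 Jacobian matrix whose (i,j) entry is the formal partial derivative of the i-th polynomial among (A₂,B₁,B₂,B₃) with respect to the j-th variable among (K,L,M,N) is the constant polynomial −Δ(τ)³/(16·E4(τ)). -/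

import Mathlib

open MvPolynomial Complex

/-- `q = e^{2πiτ}` -/
noncomputable def qc (τ : ℂ) : ℂ := Complex.exp (2 * Real.pi * Complex.I * τ)

/-- `E4(τ) = 1 + 240·Σ_{n≥1} n³qⁿ/(1−qⁿ)` -/
noncomputable def E4 (τ : ℂ) : ℂ :=
  1 + 240 * ∑' n : ℕ, ((n : ℂ) + 1) ^ 3 * qc τ ^ (n + 1) / (1 - qc τ ^ (n + 1))

/-- `E6(τ) = 1 − 504·Σ_{n≥1} n⁵qⁿ/(1−qⁿ)` -/
noncomputable def E6 (τ : ℂ) : ℂ :=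
  1 - 504 * ∑' n : ℕ, ((n : ℂ) + 1) ^ 5 * qc τ ^ (n + 1) / (1 - qc τ ^ (n + 1))

/-- `Δ = (E4³ − E6²)/1728` -/
noncomputable def Δf (τ : ℂ) : ℂ := (E4 τ ^ 3 - E6 τ ^ 2) / 1728

/-- `A₂ = Δ·K²/(4E4) − E6·L/24 + E4·M/24` in `ℂ[K,L,M,N]`, variables `X 0 = K, X 1 = L,
X 2 = M, X 3 = N`. -/
noncomputable def A2p (τ : ℂ) : MvPolynomial (Fin 4) ℂ :=
  C (Δf τ / (4 * E4 τ)) * X 0 ^ 2 - C (E6 τ / 24) * X 1 + C (E4 τ / 24) * X 2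

/-- `B₁ = Δ·K/E4` -/
noncomputable def B1p (τ : ℂ) : MvPolynomial (Fin 4) ℂ := C (Δf τ / E4 τ) * X 0

/-- `B₂ = −E6·Δ·K²/(24E4²) − E4²·L/288 + E6·M/288` -/
noncomputable def B2p (τ : ℂ) : MvPolynomial (Fin 4) ℂ :=
  -(C (E6 τ * Δf τ / (24 * E4 τ ^ 2))) * X 0 ^ 2 - C (E4 τ ^ 2 / 288) * X 1 +
    C (E6 τ / 288) * X 2

/-- `B₃ = −Δ²·K³/E4³ + Δ·K·M/(4E4) + Δ·N/4` -/
noncomputable def B3p (τ : ℂ) : MvPolynomial (Fin 4) ℂ :=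
  -(C (Δf τ ^ 2 / E4 τ ^ 3)) * X 0 ^ 3 + C (Δf τ / (4 * E4 τ)) * (X 0 * X 2) +
    C (Δf τ / 4) * X 3


set_option maxHeartbeats 1000000
/-- The formal Jacobian determinant of `(A₂,B₁,B₂,B₃)` w.r.t. `(K,L,M,N)` is the constant
polynomial `−Δ(τ)³/(16·E4(τ))`. -/
theorem stmt_8 (τ : ℂ) (hτ : 0 < τ.im) (hE4 : E4 τ ≠ 0) :
    (Matrix.of fun i j : Fin 4 => MvPolynomial.pderiv j (![A2p τ, B1p τ, B2p τ, B3p τ] i)).det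
      = C (-(Δf τ ^ 3) / (16 * E4 τ)) := by
  have hM : (Matrix.of fun i j : Fin 4 => MvPolynomial.pderiv j (![A2p τ, B1p τ, B2p τ, B3p τ] i)) =
    !![C (Δf τ/(4*E4 τ)) * X 0 * 2, C (-(E6 τ/24)), C (E4 τ/24), 0;
       C (Δf τ / E4 τ), 0, 0, 0;
       -(C (E6 τ * Δf τ/(24*E4 τ^2)) * X 0 * 2), C (-(E4 τ^2/288)), C (E6 τ/288), 0;
       -(C (Δf τ^2/E4 τ^3) * X 0^2 * 3) + C (Δf τ/(4*E4 τ)) * X 2, 0, C (Δf τ/(4*E4 τ)) * X 0,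
         C (Δf τ/4)] := by
    rw [← Matrix.ext_iff]; intro i j
    fin_cases i <;> fin_cases j <;>
      simp [A2p, B1p, B2p, B3p, pderiv_C_mul, pderiv_pow, pderiv_mul, pderiv_X]
    all_goals ring
  rw [hM]
  simp only [Matrix.det_succ_row_zero, Fin.sum_univ_succ, Fin.sum_univ_zero,
    Matrix.submatrix_apply, Matrix.cons_val', Matrix.cons_val_zero, Matrix.cons_val_one,
    Matrix.head_cons, Matrix.head_fin_const, Matrix.empty_val', Matrix.cons_val_fin_one,
    Fin.succAbove_zero, Function.comp, Matrix.cons_val_succ, Matrix.det_fin_one_of,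
    Fin.succ_zero_eq_one, Fin.succ_one_eq_two]
  norm_num [Fin.succAbove, Fin.lt_def, Fin.ext_iff]
  have hΔ : (1728 : ℂ) * Δf τ = E4 τ ^ 3 - E6 τ ^ 2 := by
    rw [Δf]; field_simp
  have hC : -(Δf τ ^ 3) / (16 * E4 τ) =
      -((Δf τ / E4 τ) * ((-(E6 τ/24)) * (E6 τ/288) - (E4 τ/24) * (-(E4 τ^2/288))) * (Δf τ/4)) := by
    field_simp
    linear_combination (-16 * Δf τ ^ 2) * hΔ
  rw [hC]
  push_cast [map_mul, map_sub, map_neg, map_div₀, map_inv₀, map_pow, map_ofNat]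
  ring
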